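/- For single-buffer simulation with unbounded buffer: if 𝒜 ⊑ω ℬ (Duplicator wins the buffered simulation game with an unbounded FIFO buffer) then L(𝒜) ⊆ L(ℬ) for Büchi automata 𝒜 and ℬ. -/

import Mathlib

open scoped Classical

/-- A Büchi automaton over alphabet `S`. -/
structure BA (S : Type) where
  Q : Type
  init : Q
  trans : Q → S → Q → Prop
  acc : Q → Prop

/-- The Büchi language of `A`: infinite words with a run from the initial state
visiting accepting states infinitely often. -/
def BA.Lang {S : Type} (A : BA S) : Set (ℕ → S) :=
  { w | ∃ ρ : ℕ → A.Q, ρ 0 = A.init ∧ (∀ n, A.trans (ρ n) (w n) (ρ (n+1))) ∧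
        ∀ n, ∃ m, n ≤ m ∧ A.acc (ρ m) }

/-- Single-buffer game: the configuration after Spoiler's move `(a, q')`:
 `a` is appended to the buffer. -/
def midCfg1 {S : Type} {QA QB : Type} (c : QA × List S × QB) (m : S × QA) :
    QA × List S × QB :=
  (m.2, c.2.1 ++ [m.1], c.2.2)

/-- Duplicator's move in the single-buffer game: skip (`none`) or consume the oldest
buffered letter along a matching transition to state `p'` (`some p'`). -/
noncomputable def dupApply1 {S : Type} (A B : BA S) :
    (A.Q × List S × B.Q) → Option B.Q → Option (A.Q × List S × B.Q)
  | c, none => some c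
  | c, some p' =>
    match c.2.1 with
    | [] => none
    | b :: γ => if B.trans c.2.2 b p' then some (c.1, γ, p') else none

/-- The configuration at the start of round `n` of the single-buffer game. -/
noncomputable def playCfg1 {S : Type} (A B : BA S)
    (sp : ℕ → S × A.Q) (dm : ℕ → Option B.Q) : ℕ → Option (A.Q × List S × B.Q)
  | 0 => some (A.init, [], B.init)
  | n+1 =>
    match playCfg1 A B sp dm n with
    | none => none
    | some c =>
      if A.trans c.1 (sp n).1 (sp n).2 then dupApply1 A B (midCfg1 c (sp n)) (dm n) else none

/-- Duplicator's winning condition for the single-buffer game with capacity `k`: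
the buffer never exceeds `k` (checked after her moves), and either Spoiler's run is
non-accepting, or Duplicator moves infinitely often and her run visits accepting
states infinitely often. -/
def Win1 {S : Type} (A B : BA S) (k : ℕ∞)
    (sp : ℕ → S × A.Q) (dm : ℕ → Option B.Q) : Prop :=
  (∀ n c, playCfg1 A B sp dm n = some c → (c.2.1.length : ℕ∞) ≤ k) ∧
  ((∃ N, ∀ n, N ≤ n → ¬ A.acc (sp n).2) ∨
    ((∀ n, ∃ m, n ≤ m ∧ dm m ≠ none) ∧ (∀ n, ∃ m, n ≤ m ∧ ∃ p ∈ dm m, B.acc p)))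

/-- Single-buffer simulation `A ⊑k B`: Duplicator has a winning strategy in the
single-buffer simulation game with buffer capacity `k` (`k = ⊤` is the unbounded
buffer). -/
def Sim1 {S : Type} (A B : BA S) (k : ℕ∞) : Prop :=
  ∃ dstrat : List ((S × A.Q) × Option B.Q) → (S × A.Q) → Option B.Q,
    ∀ sp dm, (∀ n, dm n = dstrat (List.ofFn fun i : Fin n => (sp i, dm i)) (sp n)) →
      (∀ n c, playCfg1 A B sp dm n = some c → A.trans c.1 (sp n).1 (sp n).2) →
      (∀ n, (playCfg1 A B sp dm n).isSome) ∧ Win1 A B k sp dm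

/-- Unroll a Duplicator strategy against a fixed Spoiler sequence. -/
noncomputable def mkDm {S QA QB : Type}
    (f : List ((S × QA) × Option QB) → (S × QA) → Option QB)
    (sp : ℕ → S × QA) : ℕ → Option QB
  | n => f (List.ofFn fun i : Fin n => (sp i, mkDm f sp i)) (sp n)
  decreasing_by exact i.isLt

/-- Unbounded single-buffer simulation implies language inclusion:
if `A ⊑ω B` then `L(A) ⊆ L(B)`. -/
theorem sim1_unbounded_implies_lang_incl {S : Type} (A B : BA S)
    (h : Sim1 A B ⊤) : BA.Lang A ⊆ BA.Lang B := by
  obtain ⟨f, hf⟩ := h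
  intro w hw
  obtain ⟨ρ, hρ0, hρt, hρacc⟩ := hw
  set sp : ℕ → S × A.Q := fun n => (w n, ρ (n+1)) with hsp
  set dm : ℕ → Option B.Q := mkDm f sp with hdmdef
  have hdm : ∀ n, dm n = f (List.ofFn fun i : Fin n => (sp i, dm i)) (sp n) := by
    intro n; rw [hdmdef, mkDm]
  -- the number of Duplicator (consuming) moves before round n
  set cnt : ℕ → ℕ :=
    fun n => Nat.rec 0 (fun m acc => if dm m = none then acc else acc + 1) n with hcnt
  have cnt0 : cnt 0 = 0 := rfl
  have cntS : ∀ n, cnt (n+1) = if dm n = none then cnt n else cnt n + 1 := fun n => rfl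
  have cnt_le : ∀ n, cnt n ≤ n := by
    intro n
    induction n with
    | zero => simp [cnt0]
    | succ n ih => rw [cntS]; split <;> omega
  have cnt_mono : Monotone cnt := by
    apply monotone_nat_of_le_succ
    intro n; rw [cntS]; split <;> omega
  -- key invariant about reached configurations
  have inv : ∀ n cc, playCfg1 A B sp dm n = some cc →
      cc.1 = ρ n ∧ cc.2.1 = (List.range' (cnt n) (n - cnt n)).map w := by
    intro n
    induction n with
    | zero =>
      intro cc hcc
      simp only [playCfg1, Option.some.injEq] at hcc
      subst hcc
      exact ⟨hρ0.symm, by simp [cnt0]⟩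
    | succ n ih =>
      intro cc hcc
      rw [playCfg1] at hcc
      cases hpc : playCfg1 A B sp dm n with
      | none => rw [hpc] at hcc; simp at hcc
      | some c =>
        rw [hpc] at hcc
        simp only at hcc
        by_cases ht : A.trans c.1 (sp n).1 (sp n).2
        · rw [if_pos ht] at hcc
          obtain ⟨h1, h2⟩ := ih c hpc
          have hjle : cnt n ≤ n := cnt_le n
          have hbufmid : c.2.1 ++ [w n] =
              w (cnt n) :: (List.range' (cnt n + 1) (n - cnt n)).map w := by
            rw [h2]
            have e0 : cnt n + (n - cnt n) = n := by omega
            have e1 : [w n] = (List.range' (cnt n + (n - cnt n)) 1).map w := by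
              rw [e0]; simp [List.range'_succ]
            rw [e1, ← List.map_append, List.range'_append_1]
            rw [List.range'_succ]
            simp
          have hmid : midCfg1 c (sp n) =
              (ρ (n+1), w (cnt n) :: (List.range' (cnt n + 1) (n - cnt n)).map w, c.2.2) := by
            rw [midCfg1]
            simp only [hsp]
            rw [hbufmid]
          cases hdmn : dm n with
          | none =>
            rw [hdmn] at hcc
            rw [hmid] at hcc
            simp only [dupApply1, Option.some.injEq] at hcc
            subst hcc
            refine ⟨rfl, ?_⟩
            have hc1 : cnt (n+1) = cnt n := by rw [cntS, if_pos hdmn]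
            show w (cnt n) :: _ = _
            rw [hc1, show n + 1 - cnt n = (n - cnt n) + 1 by omega, List.range'_succ]
            simp
          | some p' =>
            rw [hdmn, hmid] at hcc
            simp only [dupApply1] at hcc
            split at hcc
            · rw [Option.some.injEq] at hcc
              subst hcc
              refine ⟨rfl, ?_⟩
              have hc1 : cnt (n+1) = cnt n + 1 := by rw [cntS, hdmn]; simp
              show (List.range' (cnt n + 1) (n - cnt n)).map w = _
              rw [hc1, show n + 1 - (cnt n + 1) = n - cnt n by omega]
            · exact absurd hcc (by simp)
        · rw [if_neg ht] at hcc; simp at hcc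
  have htrans : ∀ n cc, playCfg1 A B sp dm n = some cc → A.trans cc.1 (sp n).1 (sp n).2 := by
    intro n cc hcc
    rw [(inv n cc hcc).1]
    simpa [hsp] using hρt n
  obtain ⟨hsome, hbufok, hdisj⟩ := hf sp dm hdm htrans
  have hspacc : ∀ N, ∃ n, N ≤ n ∧ A.acc (sp n).2 := by
    intro N
    obtain ⟨m, hm, hacc⟩ := hρacc (N+1)
    exact ⟨m-1, by omega, by simpa [hsp, show m-1+1 = m by omega] using hacc⟩
  have hdisj' : (∀ n, ∃ m, n ≤ m ∧ dm m ≠ none) ∧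
      (∀ n, ∃ m, n ≤ m ∧ ∃ p ∈ dm m, B.acc p) := by
    rcases hdisj with ⟨N, hN⟩ | h'
    · obtain ⟨n, hn, hacc⟩ := hspacc N
      exact absurd hacc (hN n hn)
    · exact h'
  obtain ⟨hmoves, haccB⟩ := hdisj'
  set c : ℕ → A.Q × List S × B.Q := fun n => (playCfg1 A B sp dm n).get (hsome n) with hcdef
  have hcfg : ∀ n, playCfg1 A B sp dm n = some (c n) := fun n => (Option.some_get (hsome n)).symm
  have stepB : ∀ n,
      (dm n = none → (c (n+1)).2.2 = (c n).2.2) ∧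
      (∀ p', dm n = some p' → (c (n+1)).2.2 = p' ∧ B.trans ((c n).2.2) (w (cnt n)) p') := by
    intro n
    have hcc := hcfg (n+1)
    rw [playCfg1, hcfg n] at hcc
    simp only at hcc
    have ht := htrans n (c n) (hcfg n)
    rw [if_pos ht] at hcc
    obtain ⟨h1, h2⟩ := inv n (c n) (hcfg n)
    have hjle := cnt_le n
    have e0 : cnt n + (n - cnt n) = n := by omega
    have hbufmid : (c n).2.1 ++ [w n] =
        w (cnt n) :: (List.range' (cnt n + 1) (n - cnt n)).map w := by
      rw [h2]
      have e1 : [w n] = (List.range' (cnt n + (n - cnt n)) 1).map w := by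
        rw [e0]; simp [List.range'_succ]
      rw [e1, ← List.map_append, List.range'_append_1]
      rw [List.range'_succ]
      simp
    have hmid : midCfg1 (c n) (sp n) =
        (ρ (n+1), w (cnt n) :: (List.range' (cnt n + 1) (n - cnt n)).map w, (c n).2.2) := by
      rw [midCfg1]
      simp only [hsp]
      rw [hbufmid]
    rw [hmid] at hcc
    constructor
    · intro hdn
      rw [hdn] at hcc
      simp only [dupApply1, Option.some.injEq] at hcc
      rw [← hcc]
    · intro p' hdn
      rw [hdn] at hcc
      simp only [dupApply1] at hcc
      split at hcc
      · rename_i hbt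
        rw [Option.some.injEq] at hcc
        exact ⟨by rw [← hcc], hbt⟩
      · simp at hcc
  have hconst : ∀ m k, cnt (m + k) = cnt m → (c (m + k)).2.2 = (c m).2.2 := by
    intro m k
    induction k with
    | zero => intro _; rfl
    | succ k ih =>
      intro hk
      have h1 : cnt m ≤ cnt (m + k) := cnt_mono (Nat.le_add_right m k)
      have h2 : cnt (m + k) ≤ cnt (m + k + 1) := cnt_mono (Nat.le_succ _)
      have hk' : cnt (m + k + 1) = cnt m := hk
      have hdn : dm (m + k) = none := by
        by_contra hne
        have hcs := cntS (m + k)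
        rw [if_neg hne] at hcs
        omega
      have := (stepB (m + k)).1 hdn
      calc (c (m + (k+1))).2.2 = (c (m + k)).2.2 := this
        _ = (c m).2.2 := ih (by omega)
  have hsurj : ∀ k, ∃ m, cnt m = k := by
    intro k
    induction k with
    | zero => exact ⟨0, cnt0⟩
    | succ k ih =>
      obtain ⟨m, hm⟩ := ih
      obtain ⟨m₂, hm₂, hne⟩ := hmoves m
      have hup : k + 1 ≤ cnt (m₂ + 1) := by
        have h1 : cnt m ≤ cnt m₂ := cnt_mono hm₂
        have h2 := cntS m₂
        rw [if_neg hne] at h2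
        omega
      have hex : ∃ m', k + 1 ≤ cnt m' := ⟨m₂ + 1, hup⟩
      have h1 : k + 1 ≤ cnt (Nat.find hex) := Nat.find_spec hex
      have hne0 : Nat.find hex ≠ 0 := by
        intro h0
        rw [h0, cnt0] at h1; omega
      have h2 : ¬ (k + 1 ≤ cnt (Nat.find hex - 1)) := Nat.find_min hex (by omega)
      have h3 := cntS (Nat.find hex - 1)
      rw [show Nat.find hex - 1 + 1 = Nat.find hex by omega] at h3
      refine ⟨Nat.find hex, ?_⟩
      split at h3 <;> omega
  set g : ℕ → ℕ := fun k => Nat.find (hsurj k) with hg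
  have hgspec : ∀ k, cnt (g k) = k := fun k => Nat.find_spec (hsurj k)
  set π : ℕ → B.Q := fun k => (c (g k)).2.2 with hπ
  have hπcnt : ∀ m, π (cnt m) = (c m).2.2 := by
    intro m
    have hle : g (cnt m) ≤ m := by
      simp only [hg]; exact Nat.find_le rfl
    have h1 : cnt (g (cnt m) + (m - g (cnt m))) = cnt (g (cnt m)) := by
      rw [show g (cnt m) + (m - g (cnt m)) = m by omega, hgspec]
    have h2 := hconst (g (cnt m)) (m - g (cnt m)) h1
    rw [show g (cnt m) + (m - g (cnt m)) = m by omega] at h2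
    simp only [hπ]
    exact h2.symm
  have hc0 : c 0 = (A.init, [], B.init) := by
    have h0 := hcfg 0
    simp only [playCfg1, Option.some.injEq] at h0
    exact h0.symm
  have hπ0 : π 0 = B.init := by
    have h0 : g 0 = 0 := by
      simp only [hg]
      exact Nat.le_zero.mp (Nat.find_le cnt0)
    simp only [hπ]
    rw [h0, hc0]
  have hπt : ∀ k, B.trans (π k) (w k) (π (k+1)) := by
    intro k
    have hm0 : 1 ≤ g (k+1) := by
      rcases Nat.eq_zero_or_pos (g (k+1)) with h0 | h1
      · have hgg := hgspec (k+1); rw [h0, cnt0] at hgg; omega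
      · omega
    have hm1 : cnt (g (k+1) - 1 + 1) = k+1 := by
      rw [show g (k+1) - 1 + 1 = g (k+1) by omega]; exact hgspec (k+1)
    have hmlt : ¬ (cnt (g (k+1) - 1) = k + 1) := by
      intro hkk
      have : g (k+1) ≤ g (k+1) - 1 := by
        simp only [hg]; exact Nat.find_le hkk
      omega
    have hcm : cnt (g (k+1) - 1) = k := by
      have h1 : cnt (g (k+1) - 1) ≤ cnt (g (k+1) - 1 + 1) := cnt_mono (Nat.le_succ _)
      have h2 := cntS (g (k+1) - 1)
      split at h2 <;> omega
    have hdn : dm (g (k+1) - 1) ≠ none := by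
      intro hdn
      have hcs := cntS (g (k+1) - 1)
      rw [if_pos hdn] at hcs
      omega
    obtain ⟨p', hp'⟩ := Option.ne_none_iff_exists'.mp hdn
    obtain ⟨e1, e2⟩ := (stepB (g (k+1) - 1)).2 p' hp'
    have hπk : π k = (c (g (k+1) - 1)).2.2 := by
      have hh := hπcnt (g (k+1) - 1)
      rwa [hcm] at hh
    have hπk1 : π (k+1) = (c (g (k+1) - 1 + 1)).2.2 := by
      have hh := hπcnt (g (k+1) - 1 + 1)
      rwa [hm1] at hh
    rw [hπk, hπk1, e1]
    rw [hcm] at e2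
    exact e2
  have hπacc : ∀ n, ∃ k, n ≤ k ∧ B.acc (π k) := by
    intro n
    obtain ⟨m, hm, p, hp, haccp⟩ := haccB (g n)
    have hcm : n ≤ cnt m := by
      have hmm := cnt_mono hm
      rw [hgspec n] at hmm
      exact hmm
    obtain ⟨e1, e2⟩ := (stepB m).2 p (Option.mem_def.mp hp)
    refine ⟨cnt (m+1), ?_, ?_⟩
    · have : cnt m ≤ cnt (m+1) := cnt_mono (Nat.le_succ m)
      omega
    · rw [hπcnt (m+1), e1]
      exact haccp
  exact ⟨π, hπ0, hπt, hπacc⟩
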